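/- arXiv:1810.08219 — 4 statements merged into one kernel-verified Lean document; each statement's English description precedes it below -/
import Mathlib

section
/- Let (ι, 𝒜) be a measurable space, let G : ι → (ℝ → ℝ) be such that (i, x) ↦ G i x is jointly measurable and G i is a probability density with respect to Lebesgue measure for every i ∈ ι, and let f₀ be a probability density on ℝ. Let (μₙ) be a sequence of probability measures on (ι, 𝒜). If for every ε > 0, μₙ({ i : h(G i, f₀) > ε }) → 0 as n → ∞, then h(gₙ*, f₀) → 0, where gₙ*(x) = ∫ G i x dμₙ(i) is the mixture (expected posterior) density. -/
open MeasureTheory Filter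
open scoped Topology ENNReal

/-- Hellinger distance between two densities on `ℝ` (w.r.t. Lebesgue measure). -/
noncomputable def hellinger (f g : ℝ → ℝ) : ℝ :=
  Real.sqrt (∫ x, (Real.sqrt (f x) - Real.sqrt (g x)) ^ 2)

private lemma aux_sq_le_abs {a b : ℝ} (ha : 0 ≤ a) (hb : 0 ≤ b) :
    (Real.sqrt a - Real.sqrt b) ^ 2 ≤ |a - b| := by
  have h1 := Real.sq_sqrt ha
  have h2 := Real.sq_sqrt hb
  have hs := Real.sqrt_nonneg a
  have hs' := Real.sqrt_nonneg b
  rcases le_total a b with h | h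
  · rw [abs_sub_comm, abs_of_nonneg (by linarith)]
    have := Real.sqrt_le_sqrt h
    nlinarith
  · rw [abs_of_nonneg (by linarith)]
    have := Real.sqrt_le_sqrt h
    nlinarith

private lemma aux_sq_le_add {a b : ℝ} (ha : 0 ≤ a) (hb : 0 ≤ b) :
    (Real.sqrt a - Real.sqrt b) ^ 2 ≤ a + b := by
  have h1 := Real.sq_sqrt ha
  have h2 := Real.sq_sqrt hb
  nlinarith [mul_nonneg (Real.sqrt_nonneg a) (Real.sqrt_nonneg b)]

private lemma aux_abs_eq {a b : ℝ} (ha : 0 ≤ a) (hb : 0 ≤ b) :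
    |a - b| = |Real.sqrt a - Real.sqrt b| * (Real.sqrt a + Real.sqrt b) := by
  have h1 := Real.sq_sqrt ha
  have h2 := Real.sq_sqrt hb
  have key : (Real.sqrt a - Real.sqrt b) * (Real.sqrt a + Real.sqrt b) = a - b := by
    linear_combination h1 - h2
  rw [← key, abs_mul,
    abs_of_nonneg (by positivity : (0:ℝ) ≤ Real.sqrt a + Real.sqrt b)]

private lemma aux_add_sq {a b : ℝ} (ha : 0 ≤ a) (hb : 0 ≤ b) :
    (Real.sqrt a + Real.sqrt b) ^ 2 ≤ 2 * (a + b) := by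
  have h1 := Real.sq_sqrt ha
  have h2 := Real.sq_sqrt hb
  nlinarith [sq_nonneg (Real.sqrt a - Real.sqrt b)]

/-- Deterministic core of Part 1 of Theorem 1 of the paper: if the posteriors `μₙ`
concentrate in Hellinger distance around the true density `f₀` (condition A2), then
the mixture (expected a posteriori) densities `gₙ*(x) = ∫ G i x dμₙ(i)` converge to
`f₀` in Hellinger distance. -/
theorem stmt_5 {ι : Type*} [MeasurableSpace ι]
    (G : ι → ℝ → ℝ) (hGm : Measurable fun p : ι × ℝ => G p.1 p.2)
    (hG0 : ∀ i x, 0 ≤ G i x) (hGi : ∀ i, Integrable (G i))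
    (hG1 : ∀ i, ∫ x, G i x = 1)
    (f₀ : ℝ → ℝ) (hf₀m : Measurable f₀) (hf₀0 : ∀ x, 0 ≤ f₀ x)
    (hf₀i : Integrable f₀) (hf₀1 : ∫ x, f₀ x = 1)
    (μ : ℕ → Measure ι) [∀ n, IsProbabilityMeasure (μ n)]
    (hcons : ∀ ε : ℝ, 0 < ε →
      Tendsto (fun n => μ n {i | ε < hellinger (G i) f₀}) atTop (𝓝 0)) :
    Tendsto (fun n => hellinger (fun x => ∫ i, G i x ∂μ n) f₀) atTop (𝓝 0) := by
  have hswap : Measurable fun p : ℝ × ι => G p.2 p.1 := hGm.comp measurable_swap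
  have mG : ∀ i, Measurable (G i) := fun i => hGm.comp measurable_prodMk_left
  set h : ι → ℝ := fun i => hellinger (G i) f₀ with hh
  -- measurability of the per-index square-difference
  have hsm : ∀ i, Measurable fun x => (Real.sqrt (G i x) - Real.sqrt (f₀ x)) ^ 2 :=
    fun i => ((Real.continuous_sqrt.measurable.comp (mG i)).sub
      (Real.continuous_sqrt.measurable.comp hf₀m)).pow_const 2
  -- integrability of the per-index square-difference
  have hsint : ∀ i, Integrable fun x => (Real.sqrt (G i x) - Real.sqrt (f₀ x)) ^ 2 := by
    intro i
    refine Integrable.mono' ((hGi i).add hf₀i) (hsm i).aestronglyMeasurable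
      (Eventually.of_forall fun x => ?_)
    rw [Real.norm_eq_abs, abs_of_nonneg (sq_nonneg _)]
    exact aux_sq_le_add (hG0 i x) (hf₀0 x)
  -- lintegral of densities is 1
  have lintG : ∀ i, ∫⁻ x, ENNReal.ofReal (G i x) = 1 := by
    intro i
    rw [← ofReal_integral_eq_lintegral_ofReal (hGi i) (Eventually.of_forall (hG0 i)), hG1 i,
      ENNReal.ofReal_one]
  have lintf : ∫⁻ x, ENNReal.ofReal (f₀ x) = 1 := by
    rw [← ofReal_integral_eq_lintegral_ofReal hf₀i (Eventually.of_forall hf₀0), hf₀1,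
      ENNReal.ofReal_one]
  -- h i ^ 2 = ∫ sq diff, and the lintegral identity
  have hsq : ∀ i, ∫⁻ x, ENNReal.ofReal ((Real.sqrt (G i x) - Real.sqrt (f₀ x)) ^ 2)
      = ENNReal.ofReal (h i) ^ 2 := by
    intro i
    rw [← ofReal_integral_eq_lintegral_ofReal (hsint i)
      (Eventually.of_forall fun x => sq_nonneg _)]
    have hnn : 0 ≤ ∫ x, (Real.sqrt (G i x) - Real.sqrt (f₀ x)) ^ 2 :=
      integral_nonneg fun x => sq_nonneg _
    have : h i ^ 2 = ∫ x, (Real.sqrt (G i x) - Real.sqrt (f₀ x)) ^ 2 := by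
      simp only [hh, hellinger]
      exact Real.sq_sqrt hnn
    rw [← this]
    exact ENNReal.ofReal_pow (Real.sqrt_nonneg _) 2
  -- L1 distance of G i and f₀ bounded by 2 * hellinger distance
  have hTle : ∀ i, (∫⁻ x, ENNReal.ofReal |G i x - f₀ x|) ≤ 2 * ENNReal.ofReal (h i) := by
    intro i
    set u : ℝ → ℝ≥0∞ := fun x => ENNReal.ofReal |Real.sqrt (G i x) - Real.sqrt (f₀ x)| with hu
    set v : ℝ → ℝ≥0∞ := fun x => ENNReal.ofReal (Real.sqrt (G i x) + Real.sqrt (f₀ x)) with hv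
    have hum : Measurable u :=
      (((Real.continuous_sqrt.measurable.comp (mG i)).sub
        (Real.continuous_sqrt.measurable.comp hf₀m)).abs).ennreal_ofReal
    have hvm : Measurable v :=
      (((Real.continuous_sqrt.measurable.comp (mG i)).add
        (Real.continuous_sqrt.measurable.comp hf₀m))).ennreal_ofReal
    have hpq : Real.HolderConjugate 2 2 := Real.holderConjugate_iff.mpr ⟨by norm_num, by norm_num⟩
    have hholder := ENNReal.lintegral_mul_le_Lp_mul_Lq volume hpq hum.aemeasurable hvm.aemeasurable
    have hptw : ∀ x, ENNReal.ofReal |G i x - f₀ x| = (u * v) x := by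
      intro x
      rw [aux_abs_eq (hG0 i x) (hf₀0 x), ENNReal.ofReal_mul (abs_nonneg _)]
      rfl
    have hufac : (∫⁻ x, u x ^ (2 : ℝ)) ^ (1 / (2 : ℝ)) = ENNReal.ofReal (h i) := by
      have : ∀ x, u x ^ (2 : ℝ) =
          ENNReal.ofReal ((Real.sqrt (G i x) - Real.sqrt (f₀ x)) ^ 2) := by
        intro x
        rw [hu, ENNReal.ofReal_rpow_of_nonneg (abs_nonneg _) (by norm_num)]
        congr 1
        rw [show ((2:ℝ)) = ((2:ℕ):ℝ) by norm_num, Real.rpow_natCast, sq_abs]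
      simp_rw [this]
      rw [hsq i, ← ENNReal.rpow_natCast _ 2, ← ENNReal.rpow_mul]
      norm_num
    have hvfac : (∫⁻ x, v x ^ (2 : ℝ)) ^ (1 / (2 : ℝ)) ≤ 2 := by
      have hle : (∫⁻ x, v x ^ (2 : ℝ)) ≤ 4 := by
        have : ∀ x, v x ^ (2 : ℝ) ≤
            2 * (ENNReal.ofReal (G i x) + ENNReal.ofReal (f₀ x)) := by
          intro x
          rw [hv, ENNReal.ofReal_rpow_of_nonneg (by positivity) (by norm_num)]
          calc ENNReal.ofReal ((Real.sqrt (G i x) + Real.sqrt (f₀ x)) ^ (2 : ℝ))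
              ≤ ENNReal.ofReal (2 * (G i x + f₀ x)) := by
                apply ENNReal.ofReal_le_ofReal
                rw [show ((2:ℝ)) = ((2:ℕ):ℝ) by norm_num, Real.rpow_natCast]
                exact aux_add_sq (hG0 i x) (hf₀0 x)
            _ = 2 * (ENNReal.ofReal (G i x) + ENNReal.ofReal (f₀ x)) := by
                rw [ENNReal.ofReal_mul (by norm_num),
                  ENNReal.ofReal_add (hG0 i x) (hf₀0 x)]
                norm_num
        calc (∫⁻ x, v x ^ (2 : ℝ))
            ≤ ∫⁻ x, 2 * (ENNReal.ofReal (G i x) + ENNReal.ofReal (f₀ x)) :=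
              lintegral_mono this
          _ = 4 := by
              rw [lintegral_const_mul 2 (f := fun x => ENNReal.ofReal (G i x) + ENNReal.ofReal (f₀ x)) ((mG i).ennreal_ofReal.add hf₀m.ennreal_ofReal),
                lintegral_add_left (mG i).ennreal_ofReal, lintG i, lintf]
              norm_num
      calc (∫⁻ x, v x ^ (2 : ℝ)) ^ (1 / (2 : ℝ)) ≤ (4 : ℝ≥0∞) ^ (1 / (2 : ℝ)) :=
            ENNReal.rpow_le_rpow hle (by norm_num)
        _ = 2 := by
            rw [show (4 : ℝ≥0∞) = (2 : ℝ≥0∞) ^ (2 : ℕ) by norm_num,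
              ← ENNReal.rpow_natCast, ← ENNReal.rpow_mul]
            norm_num
    calc (∫⁻ x, ENNReal.ofReal |G i x - f₀ x|) = ∫⁻ x, (u * v) x := by
          exact lintegral_congr hptw
      _ ≤ (∫⁻ x, u x ^ (2 : ℝ)) ^ (1 / (2 : ℝ)) * (∫⁻ x, v x ^ (2 : ℝ)) ^ (1 / (2 : ℝ)) :=
          hholder
      _ ≤ ENNReal.ofReal (h i) * 2 := by
          rw [hufac]
          exact mul_le_mul_right hvfac _
      _ = 2 * ENNReal.ofReal (h i) := mul_comm _ _
  -- measurability of h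
  have hmeash : Measurable h := by
    have h1 : StronglyMeasurable fun p : ι × ℝ =>
        (Real.sqrt (G p.1 p.2) - Real.sqrt (f₀ p.2)) ^ 2 :=
      (((Real.continuous_sqrt.measurable.comp hGm).sub
        (Real.continuous_sqrt.measurable.comp (hf₀m.comp measurable_snd))).pow_const
        2).stronglyMeasurable
    have h2 := h1.integral_prod_right' (ν := volume)
    exact Real.continuous_sqrt.measurable.comp h2.measurable
  -- mixture density facts
  have hgsm : ∀ n, Measurable fun x => ∫ i, G i x ∂μ n := by
    intro n
    have hu : StronglyMeasurable (Function.uncurry G) := hGm.stronglyMeasurable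
    have := hu.integral_prod_left (μ := μ n)
    exact this.measurable
  have hgs0 : ∀ n x, (0 : ℝ) ≤ ∫ i, G i x ∂μ n := fun n x => integral_nonneg fun i => hG0 i x
  -- a.e. integrability in i
  have haeint : ∀ n, ∀ᵐ x : ℝ, Integrable (fun i => G i x) (μ n) := by
    intro n
    have hm : Measurable fun p : ℝ × ι => ENNReal.ofReal (G p.2 p.1) := hswap.ennreal_ofReal
    have hfin : (∫⁻ x : ℝ, ∫⁻ i, ENNReal.ofReal (G i x) ∂μ n) ≠ ∞ := by
      rw [lintegral_lintegral_swap hm.aemeasurable]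
      simp only [lintG]
      simp
    have hmeasInner : Measurable fun x : ℝ => ∫⁻ i, ENNReal.ofReal (G i x) ∂μ n :=
      hm.lintegral_prod_right'
    filter_upwards [ae_lt_top hmeasInner hfin] with x hx
    refine ⟨(hGm.comp (measurable_id.prodMk measurable_const)).aestronglyMeasurable, ?_⟩
    rw [hasFiniteIntegral_iff_ofReal (Eventually.of_forall fun i => hG0 i x)]
    exact hx
  -- main estimate, part 1
  have hmain : ∀ n, (∫⁻ x, ENNReal.ofReal
        ((Real.sqrt (∫ i, G i x ∂μ n) - Real.sqrt (f₀ x)) ^ 2))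
      ≤ ∫⁻ i, (∫⁻ x, ENNReal.ofReal |G i x - f₀ x|) ∂μ n := by
    intro n
    have step1 : ∀ᵐ x : ℝ, ENNReal.ofReal
        ((Real.sqrt (∫ i, G i x ∂μ n) - Real.sqrt (f₀ x)) ^ 2)
        ≤ ∫⁻ i, ENNReal.ofReal |G i x - f₀ x| ∂μ n := by
      filter_upwards [haeint n] with x hx
      have h1 : (Real.sqrt (∫ i, G i x ∂μ n) - Real.sqrt (f₀ x)) ^ 2
          ≤ |(∫ i, G i x ∂μ n) - f₀ x| := aux_sq_le_abs (hgs0 n x) (hf₀0 x)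
      have h2 : |(∫ i, G i x ∂μ n) - f₀ x| ≤ ∫ i, |G i x - f₀ x| ∂μ n := by
        have heq : (∫ i, G i x ∂μ n) - f₀ x = ∫ i, (G i x - f₀ x) ∂μ n := by
          rw [integral_sub hx (integrable_const _), integral_const]
          simp
        rw [heq]
        simpa [Real.norm_eq_abs] using
          norm_integral_le_integral_norm (μ := μ n) (f := fun i => G i x - f₀ x)
      have h3 : ENNReal.ofReal (∫ i, |G i x - f₀ x| ∂μ n)
          = ∫⁻ i, ENNReal.ofReal |G i x - f₀ x| ∂μ n :=
        ofReal_integral_eq_lintegral_ofReal ((hx.sub (integrable_const _)).abs)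
          (Eventually.of_forall fun i => abs_nonneg _)
      calc ENNReal.ofReal ((Real.sqrt (∫ i, G i x ∂μ n) - Real.sqrt (f₀ x)) ^ 2)
          ≤ ENNReal.ofReal (∫ i, |G i x - f₀ x| ∂μ n) :=
            ENNReal.ofReal_le_ofReal (h1.trans h2)
        _ = _ := h3
    have hm2 : Measurable fun p : ℝ × ι => ENNReal.ofReal |G p.2 p.1 - f₀ p.1| :=
      ((hswap.sub (hf₀m.comp measurable_fst)).abs).ennreal_ofReal
    calc (∫⁻ x, ENNReal.ofReal ((Real.sqrt (∫ i, G i x ∂μ n) - Real.sqrt (f₀ x)) ^ 2))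
        ≤ ∫⁻ x, ∫⁻ i, ENNReal.ofReal |G i x - f₀ x| ∂μ n := lintegral_mono_ae step1
      _ = ∫⁻ i, (∫⁻ x, ENNReal.ofReal |G i x - f₀ x|) ∂μ n :=
          lintegral_lintegral_swap hm2.aemeasurable
  -- main estimate, part 2
  have hsplit : ∀ (ε' : ℝ), 0 < ε' → ∀ n,
      (∫⁻ i, (∫⁻ x, ENNReal.ofReal |G i x - f₀ x|) ∂μ n)
      ≤ ENNReal.ofReal (2 * ε') + 2 * μ n {i | ε' < h i} := by
    intro ε' hε' n
    have hset : MeasurableSet {i | ε' < h i} := measurableSet_lt measurable_const hmeash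
    have hind : ∀ i, (∫⁻ x, ENNReal.ofReal |G i x - f₀ x|)
        ≤ ENNReal.ofReal (2 * ε')
          + ({i | ε' < h i}).indicator (fun _ => (2 : ℝ≥0∞)) i := by
      intro i
      by_cases hi : ε' < h i
      · have hb : (∫⁻ x, ENNReal.ofReal |G i x - f₀ x|) ≤ 2 := by
          calc (∫⁻ x, ENNReal.ofReal |G i x - f₀ x|)
              ≤ ∫⁻ x, (ENNReal.ofReal (G i x) + ENNReal.ofReal (f₀ x)) := by
                refine lintegral_mono fun x => ?_
                rw [← ENNReal.ofReal_add (hG0 i x) (hf₀0 x)]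
                refine ENNReal.ofReal_le_ofReal ?_
                calc |G i x - f₀ x| ≤ |G i x| + |f₀ x| := abs_sub _ _
                  _ = G i x + f₀ x := by
                      rw [abs_of_nonneg (hG0 i x), abs_of_nonneg (hf₀0 x)]
            _ = 2 := by
                rw [lintegral_add_left (mG i).ennreal_ofReal, lintG i, lintf]
                norm_num
        rw [Set.indicator_of_mem (by exact hi)]
        exact hb.trans le_add_self
      · have hle : h i ≤ ε' := not_lt.mp hi
        calc (∫⁻ x, ENNReal.ofReal |G i x - f₀ x|) ≤ 2 * ENNReal.ofReal (h i) := hTle i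
          _ ≤ 2 * ENNReal.ofReal ε' := by
              exact mul_le_mul_right (ENNReal.ofReal_le_ofReal hle) _
          _ = ENNReal.ofReal (2 * ε') := by
              rw [ENNReal.ofReal_mul (by norm_num : (0:ℝ) ≤ 2), ENNReal.ofReal_ofNat]
          _ ≤ _ := le_self_add
    calc (∫⁻ i, (∫⁻ x, ENNReal.ofReal |G i x - f₀ x|) ∂μ n)
        ≤ ∫⁻ i, (ENNReal.ofReal (2 * ε')
            + ({i | ε' < h i}).indicator (fun _ => (2 : ℝ≥0∞)) i) ∂μ n :=
          lintegral_mono hind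
      _ = ENNReal.ofReal (2 * ε') + 2 * μ n {i | ε' < h i} := by
          rw [lintegral_add_left measurable_const, lintegral_const,
            lintegral_indicator_const hset]
          simp
  -- representation of the mixture hellinger distance
  have hrepr : ∀ n, hellinger (fun x => ∫ i, G i x ∂μ n) f₀
      = Real.sqrt ((∫⁻ x, ENNReal.ofReal
          ((Real.sqrt (∫ i, G i x ∂μ n) - Real.sqrt (f₀ x)) ^ 2)).toReal) := by
    intro n
    rw [hellinger]
    congr 1
    rw [integral_eq_lintegral_of_nonneg_ae (f := fun x => (Real.sqrt (∫ i, G i x ∂μ n) - Real.sqrt (f₀ x)) ^ 2) (Eventually.of_forall fun x => sq_nonneg _)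
      (((hgsm n).sqrt.sub hf₀m.sqrt).pow_const 2).aestronglyMeasurable]
  -- final limit argument
  rw [Metric.tendsto_atTop]
  intro ε hε
  set δ : ℝ := ε ^ 2 / 8 with hδdef
  have hδ : 0 < δ := by positivity
  have hev : ∀ᶠ n in atTop, μ n {i | δ < h i} < ENNReal.ofReal δ :=
    (hcons δ hδ).eventually (gt_mem_nhds (ENNReal.ofReal_pos.mpr hδ))
  obtain ⟨N, hN⟩ := eventually_atTop.mp hev
  refine ⟨N, fun n hn => ?_⟩
  have hLn : (∫⁻ x, ENNReal.ofReal
      ((Real.sqrt (∫ i, G i x ∂μ n) - Real.sqrt (f₀ x)) ^ 2)) ≤ ENNReal.ofReal (4 * δ) := by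
    calc (∫⁻ x, ENNReal.ofReal ((Real.sqrt (∫ i, G i x ∂μ n) - Real.sqrt (f₀ x)) ^ 2))
        ≤ ENNReal.ofReal (2 * δ) + 2 * μ n {i | δ < h i} :=
          (hmain n).trans (hsplit δ hδ n)
      _ ≤ ENNReal.ofReal (2 * δ) + 2 * ENNReal.ofReal δ :=
          add_le_add_right (mul_le_mul_right (hN n hn).le _) _
      _ = ENNReal.ofReal (4 * δ) := by
          rw [show (2 : ℝ≥0∞) = ENNReal.ofReal (2 : ℝ) by simp,
            ← ENNReal.ofReal_mul (by norm_num : (0:ℝ) ≤ 2),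
            ← ENNReal.ofReal_add (by positivity) (by positivity)]
          ring_nf
  have htoReal : (∫⁻ x, ENNReal.ofReal
      ((Real.sqrt (∫ i, G i x ∂μ n) - Real.sqrt (f₀ x)) ^ 2)).toReal ≤ 4 * δ := by
    have := ENNReal.toReal_mono ENNReal.ofReal_ne_top hLn
    rwa [ENNReal.toReal_ofReal (by positivity)] at this
  have hval : hellinger (fun x => ∫ i, G i x ∂μ n) f₀ ≤ Real.sqrt (4 * δ) := by
    rw [hrepr n]
    exact Real.sqrt_le_sqrt htoReal
  have hnn : 0 ≤ hellinger (fun x => ∫ i, G i x ∂μ n) f₀ := Real.sqrt_nonneg _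
  rw [Real.dist_eq, sub_zero, abs_of_nonneg hnn]
  have h4δ : Real.sqrt (4 * δ) < ε := by
    have : 4 * δ < ε ^ 2 := by rw [hδdef]; nlinarith
    calc Real.sqrt (4 * δ) < Real.sqrt (ε ^ 2) := Real.sqrt_lt_sqrt (by positivity) this
      _ = ε := by rw [Real.sqrt_sq hε.le]
  exact lt_of_le_of_lt hval h4δ
end

section
/- Let Θ be a compact metric space, let f : Θ → (ℝ → ℝ) assign to each θ a probability density f_θ with respect to Lebesgue measure, with (θ, x) ↦ f_θ(x) measurable, and suppose that for almost every x the map θ ↦ f_θ(x) is continuous. Then for every probability density g on ℝ there exists θ* ∈ Θ such that h(f_{θ*}, g) = inf_{θ ∈ Θ} h(f_θ, g); that is, the minimum Hellinger distance functional T(g) is well-defined (possibly multivalued) on the space of densities. -/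
open MeasureTheory Filter Topology

/-- `|√a - √b| ≤ √|a - b|` for nonnegative reals. -/
lemma abs_sqrt_sub_sqrt_le {a b : ℝ} (ha : 0 ≤ a) (hb : 0 ≤ b) :
    |Real.sqrt a - Real.sqrt b| ≤ Real.sqrt (|a - b|) := by
  have key : ∀ u v : ℝ, 0 ≤ v → v ≤ u →
      Real.sqrt u - Real.sqrt v ≤ Real.sqrt (|u - v|) := by
    intro u v hv huv
    rw [abs_of_nonneg (by linarith)]
    have h1 : Real.sqrt u ≤ Real.sqrt v + Real.sqrt (u - v) := by
      rw [Real.sqrt_le_iff]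
      constructor
      · positivity
      · nlinarith [Real.sq_sqrt hv, Real.sq_sqrt (by linarith : (0:ℝ) ≤ u - v),
          mul_nonneg (Real.sqrt_nonneg v) (Real.sqrt_nonneg (u - v))]
    linarith
  rcases le_total b a with h | h
  · have := key a b hb h
    rwa [abs_of_nonneg (sub_nonneg.2 (Real.sqrt_le_sqrt h))]
  · have := key b a ha h
    rw [abs_sub_comm] at this ⊢
    rwa [abs_of_nonneg (sub_nonneg.2 (Real.sqrt_le_sqrt h))]

/-- Pointwise AM-GM trick: `√a·√c ≤ (|a-b|/ε + ε·c)/2 + √b·√c` type bound,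
phrased as the bound we need. -/
lemma sqrt_mul_sub_le {a b c ε : ℝ} (ha : 0 ≤ a) (hb : 0 ≤ b) (hc : 0 ≤ c)
    (hε : 0 < ε) :
    |Real.sqrt a * Real.sqrt c - Real.sqrt b * Real.sqrt c|
      ≤ (|a - b| / ε + ε * c) / 2 := by
  have h1 : |Real.sqrt a * Real.sqrt c - Real.sqrt b * Real.sqrt c|
      = |Real.sqrt a - Real.sqrt b| * Real.sqrt c := by
    rw [← sub_mul, abs_mul, abs_of_nonneg (Real.sqrt_nonneg c)]
  rw [h1]
  have h2 : |Real.sqrt a - Real.sqrt b| * Real.sqrt c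
      ≤ Real.sqrt (|a - b|) * Real.sqrt c :=
    mul_le_mul_of_nonneg_right (abs_sqrt_sub_sqrt_le ha hb) (Real.sqrt_nonneg c)
  refine h2.trans ?_
  -- `2 u v ≤ u²/ε + ε v²` with `u = √|a-b|`, `v = √c`
  have hu := Real.sq_sqrt (abs_nonneg (a - b))
  have hv := Real.sq_sqrt hc
  have hsq : 0 ≤ (Real.sqrt (|a - b|) - ε * Real.sqrt c) ^ 2 := sq_nonneg _
  have h3 : 2 * ε * (Real.sqrt (|a - b|) * Real.sqrt c) ≤ |a - b| + ε ^ 2 * c := by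
    nlinarith
  have h4 : Real.sqrt (|a - b|) * Real.sqrt c ≤ (|a - b| + ε ^ 2 * c) / (2 * ε) := by
    rw [le_div_iff₀ (by positivity)]
    linarith
  refine h4.trans (le_of_eq ?_)
  field_simp

open MeasureTheory

/-- Existence of the minimum Hellinger distance functional `T(g)` under condition A1
of the paper: for `Θ` compact and `θ ↦ f_θ(x)` continuous for almost every `x`, the
infimum `inf_{θ∈Θ} h(f_θ, g)` is attained at some `θ* ∈ Θ`. -/
theorem stmt_8 {Θ : Type*} [MetricSpace Θ] [CompactSpace Θ] [Nonempty Θ]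
    [MeasurableSpace Θ] [BorelSpace Θ]
    (f : Θ → ℝ → ℝ) (hfm : Measurable fun p : Θ × ℝ => f p.1 p.2)
    (hf0 : ∀ θ x, 0 ≤ f θ x) (hfi : ∀ θ, Integrable (f θ))
    (hf1 : ∀ θ, ∫ x, f θ x = 1)
    (hcont : ∀ᵐ x ∂(volume : Measure ℝ), Continuous fun θ => f θ x)
    (g : ℝ → ℝ) (hgm : Measurable g) (hg0 : ∀ x, 0 ≤ g x)
    (hgi : Integrable g) (hg1 : ∫ x, g x = 1) :
    ∃ θstar : Θ, hellinger (f θstar) g = ⨅ θ : Θ, hellinger (f θ) g := by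
  -- measurability of each slice
  have hmeas : ∀ θ, Measurable (f θ) := fun θ =>
    hfm.comp (measurable_prodMk_left : Measurable fun x : ℝ => (θ, x))
  -- the affinity functional `G`
  set G : Θ → ℝ := fun θ => ∫ x, Real.sqrt (f θ x) * Real.sqrt (g x) with hG
  -- integrability of the affinity integrand
  have hGint : ∀ θ, Integrable (fun x => Real.sqrt (f θ x) * Real.sqrt (g x)) := by
    intro θ
    have hbd : Integrable (fun x : ℝ => (f θ x + g x) / 2) :=
      (((hfi θ).add hgi).div_const 2 :)
    refine Integrable.mono' hbd
      ((hmeas θ).sqrt.mul hgm.sqrt).aestronglyMeasurable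
      (Filter.Eventually.of_forall fun x => ?_)
    have h1 := hf0 θ x
    have h2 := hg0 x
    have hs1 := Real.sq_sqrt h1
    have hs2 := Real.sq_sqrt h2
    rw [Real.norm_eq_abs, abs_of_nonneg (mul_nonneg (Real.sqrt_nonneg _) (Real.sqrt_nonneg _))]
    nlinarith [sq_nonneg (Real.sqrt (f θ x) - Real.sqrt (g x))]
  -- key identity : the squared Hellinger distance is `2 - 2 G θ`
  have hkey : ∀ θ, (∫ x, (Real.sqrt (f θ x) - Real.sqrt (g x)) ^ 2) = 2 - 2 * G θ := by
    intro θ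
    have heq : (fun x => (Real.sqrt (f θ x) - Real.sqrt (g x)) ^ 2)
        = fun x => (f θ x + g x) - 2 * (Real.sqrt (f θ x) * Real.sqrt (g x)) := by
      funext x
      have hs1 := Real.sq_sqrt (hf0 θ x)
      have hs2 := Real.sq_sqrt (hg0 x)
      ring_nf
      nlinarith [hs1, hs2]
    have hadd : Integrable (fun x : ℝ => f θ x + g x) := ((hfi θ).add hgi :)
    have hcm : Integrable (fun x : ℝ => 2 * (Real.sqrt (f θ x) * Real.sqrt (g x))) :=
      (hGint θ).const_mul 2
    rw [heq, integral_sub hadd hcm, integral_add (hfi θ) hgi,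
      integral_const_mul, hf1 θ, hg1, hG]
    ring
  -- continuity of `G`
  have hGcont : Continuous G := by
    rw [continuous_iff_seqContinuous]
    intro u p hu
    -- pointwise a.e. convergence of the densities
    have hptw : ∀ᵐ x ∂(volume : Measure ℝ),
        Tendsto (fun n => f (u n) x) atTop (𝓝 (f p x)) :=
      hcont.mono fun x hx => ((hx.tendsto p).comp hu)
    -- Scheffé: L¹ convergence
    have hmin_int : ∀ n, Integrable (fun x => min (f (u n) x) (f p x)) := by
      intro n
      refine Integrable.mono' (hfi p)
        (((hmeas (u n)).min (hmeas p)).aestronglyMeasurable)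
        (Filter.Eventually.of_forall fun x => ?_)
      rw [Real.norm_eq_abs, abs_of_nonneg (le_min (hf0 _ _) (hf0 _ _))]
      exact min_le_right _ _
    have hMn : Tendsto (fun n => ∫ x, min (f (u n) x) (f p x)) atTop (𝓝 1) := by
      have := tendsto_integral_of_dominated_convergence (μ := (volume : Measure ℝ))
        (F := fun n x => min (f (u n) x) (f p x)) (f := f p) (bound := f p)
        (fun n => (((hmeas (u n)).min (hmeas p)).aestronglyMeasurable))
        (hfi p)
        (fun n => Filter.Eventually.of_forall fun x => by
          rw [Real.norm_eq_abs, abs_of_nonneg (le_min (hf0 _ _) (hf0 _ _))]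
          exact min_le_right _ _)
        (hptw.mono fun x hx => by
          simpa [min_self] using hx.min (tendsto_const_nhds (x := f p x)))
      rwa [hf1 p] at this
    have hScheffe : Tendsto (fun n => ∫ x, |f (u n) x - f p x|) atTop (𝓝 0) := by
      have habs : ∀ n, (fun x => |f (u n) x - f p x|)
          = fun x => (f (u n) x + f p x) - 2 * min (f (u n) x) (f p x) := by
        intro n; funext x
        rcases le_total (f (u n) x) (f p x) with h | h
        · rw [min_eq_left h, abs_of_nonpos (by linarith)]; ring
        · rw [min_eq_right h, abs_of_nonneg (by linarith)]; ring
      have hcalc : ∀ n, (∫ x, |f (u n) x - f p x|)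
          = 2 - 2 * ∫ x, min (f (u n) x) (f p x) := by
        intro n
        have hadd : Integrable (fun x : ℝ => f (u n) x + f p x) :=
          ((hfi (u n)).add (hfi p) :)
        have hcm : Integrable (fun x : ℝ => 2 * min (f (u n) x) (f p x)) :=
          (hmin_int n).const_mul 2
        rw [habs n, integral_sub hadd hcm,
          integral_add (hfi (u n)) (hfi p), integral_const_mul, hf1, hf1]
        ring
      simp only [hcalc]
      have : Tendsto (fun n => 2 - 2 * ∫ x, min (f (u n) x) (f p x)) atTop
          (𝓝 (2 - 2 * 1)) := (tendsto_const_nhds).sub (hMn.const_mul 2)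
      simpa using this
    -- now show `G (u n) → G p` using the ε-trick
    rw [Metric.tendsto_atTop]
    intro δ hδ
    have hδ4 : 0 < δ / 4 := by linarith
    have hδ2 : 0 < δ ^ 2 / 8 := by positivity
    obtain ⟨N, hN⟩ := (Metric.tendsto_atTop.1 hScheffe) (δ ^ 2 / 8) hδ2
    refine ⟨N, fun n hn => ?_⟩
    show dist (G (u n)) (G p) < δ
    have hIn := hN n hn
    rw [Real.dist_eq, sub_zero] at hIn
    have hInnn : (∫ x, |f (u n) x - f p x|) < δ ^ 2 / 8 :=
      lt_of_abs_lt hIn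
    have hInpos : 0 ≤ ∫ x, |f (u n) x - f p x| :=
      integral_nonneg fun x => abs_nonneg _
    -- bound |G (u n) - G p|
    have hbound : |G (u n) - G p|
        ≤ (∫ x, |f (u n) x - f p x|) / (2 * (δ/4)) + (δ/4) / 2 := by
      have hsub : G (u n) - G p = ∫ x,
          (Real.sqrt (f (u n) x) * Real.sqrt (g x)
            - Real.sqrt (f p x) * Real.sqrt (g x)) := by
        rw [hG]; exact (integral_sub (hGint (u n)) (hGint p)).symm
      rw [hsub]
      calc |∫ x, (Real.sqrt (f (u n) x) * Real.sqrt (g x)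
              - Real.sqrt (f p x) * Real.sqrt (g x))|
          ≤ ∫ x, |Real.sqrt (f (u n) x) * Real.sqrt (g x)
              - Real.sqrt (f p x) * Real.sqrt (g x)| := by
            simpa [Real.norm_eq_abs] using
              norm_integral_le_integral_norm (μ := (volume : Measure ℝ))
                (fun x => Real.sqrt (f (u n) x) * Real.sqrt (g x)
                  - Real.sqrt (f p x) * Real.sqrt (g x))
        _ ≤ ∫ x, (|f (u n) x - f p x| / (δ/4) + (δ/4) * g x) / 2 := by
            have hd1 : Integrable (fun x : ℝ => |Real.sqrt (f (u n) x) * Real.sqrt (g x)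
                - Real.sqrt (f p x) * Real.sqrt (g x)|) :=
              (((hGint (u n)).sub (hGint p)).abs :)
            have hd2 : Integrable (fun x : ℝ =>
                (|f (u n) x - f p x| / (δ/4) + (δ/4) * g x) / 2) :=
              (((((hfi (u n)).sub (hfi p)).abs.div_const (δ/4)).add
                (hgi.const_mul (δ/4))).div_const 2 :)
            refine integral_mono hd1 hd2 ?_
            intro x
            exact sqrt_mul_sub_le (hf0 (u n) x) (hf0 p x) (hg0 x) hδ4
        _ = (∫ x, |f (u n) x - f p x|) / (2 * (δ/4)) + (δ/4) / 2 := by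
            have he1 : Integrable (fun x : ℝ => |f (u n) x - f p x| / (δ/4)) :=
              (((hfi (u n)).sub (hfi p)).abs.div_const (δ/4) :)
            have he2 : Integrable (fun x : ℝ => (δ/4) * g x) := hgi.const_mul (δ/4)
            rw [integral_div, integral_add he1 he2,
              integral_div, integral_const_mul, hg1]
            field_simp
    have h2 : (∫ x, |f (u n) x - f p x|) / (2 * (δ/4)) < δ/4 := by
      rw [div_lt_iff₀ (by linarith)]
      nlinarith
    calc dist (G (u n)) (G p) = |G (u n) - G p| := Real.dist_eq _ _
      _ ≤ (∫ x, |f (u n) x - f p x|) / (2 * (δ/4)) + (δ/4) / 2 := hbound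
      _ < δ/4 + (δ/4)/2 := by linarith
      _ < δ := by linarith
  -- maximize `G` on the compact space `Θ`
  obtain ⟨θstar, -, hmax⟩ :=
    isCompact_univ.exists_isMaxOn Set.univ_nonempty hGcont.continuousOn
  have hmin : ∀ θ, hellinger (f θstar) g ≤ hellinger (f θ) g := by
    intro θ
    have hGle : G θ ≤ G θstar := hmax (Set.mem_univ θ)
    unfold hellinger
    rw [hkey θstar, hkey θ]
    exact Real.sqrt_le_sqrt (by linarith)
  refine ⟨θstar, le_antisymm ?_ ?_⟩
  · exact le_ciInf hmin
  · exact ciInf_le ⟨0, fun y ⟨θ, hθ⟩ => hθ ▸ Real.sqrt_nonneg _⟩ θstar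
end

section
/- Let g₀ be a probability density on [0,1] with c ≤ g₀(x) ≤ C for all x, where 0 < c ≤ C < ∞, let k ≥ 1, and let g* be any probability density on [0,1] that is constant on each interval I_j = [(j−1)/k, j/k) and satisfies c ≤ g*(x) ≤ C. Then h(g₀, g₀_{[k]})² ≤ (C/c) · h(g₀, g*)², where g₀_{[k]} = k Σ_{j=1}^k (∫_{I_j} g₀) 1_{I_j} is the histogram projection of g₀. In particular the projection chain h(g₀, g₀_{[k]})² ≲ ∫ (g₀ − g₀_{[k]})² ≤ ∫ (g₀ − g*)² ≲ h(g₀, g*)² holds. -/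
open MeasureTheory

/-- The `j`-th bin (for `j = 0, …, k−1`) of the regular `k`-bin partition of `[0,1)`. -/
def histBin (k j : ℕ) : Set ℝ := Set.Ico ((j : ℝ) / k) (((j : ℝ) + 1) / k)

/-- The histogram projection `g_{[k]} = k Σ_j (∫_{I_j} g) 1_{I_j}` of `g` onto
regular `k`-bin histograms on `[0,1)`. -/
noncomputable def histProj (k : ℕ) (g : ℝ → ℝ) : ℝ → ℝ := fun x =>
  ∑ j ∈ Finset.range k,
    (histBin k j).indicator (fun _ => (k : ℝ) * ∫ y in histBin k j, g y) x

/-- `m` is a regular `k`-bin histogram on `[0,1)`: it is constant on each bin `I_j`. -/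
def IsHistogram (k : ℕ) (m : ℝ → ℝ) : Prop :=
  ∀ j < k, ∀ x ∈ histBin k j, ∀ y ∈ histBin k j, m x = m y

/- ---------- auxiliary lemmas ---------- -/

lemma histBin_meas (k j : ℕ) : MeasurableSet (histBin k j) := measurableSet_Ico

lemma histBin_subset {k j : ℕ} (hj : j < k) : histBin k j ⊆ Set.Ico (0 : ℝ) 1 := by
  have hk0 : (0 : ℝ) < k := by exact_mod_cast Nat.zero_lt_of_lt hj
  intro x hx
  obtain ⟨h1, h2⟩ := hx
  refine ⟨le_trans (by positivity) h1, lt_of_lt_of_le h2 ?_⟩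
  rw [div_le_one hk0]
  exact_mod_cast Nat.succ_le_of_lt hj

lemma histBin_disjoint {k : ℕ} (hk : 1 ≤ k) {i j : ℕ} (h : i ≠ j) :
    Disjoint (histBin k i) (histBin k j) := by
  have hk0 : (0 : ℝ) < k := by exact_mod_cast hk
  rw [Set.disjoint_left]
  rintro x ⟨hi1, hi2⟩ ⟨hj1, hj2⟩
  rcases lt_or_gt_of_ne h with hij | hij
  · have hij' : ((i : ℝ) + 1) ≤ (j : ℝ) := by exact_mod_cast Nat.succ_le_of_lt hij
    have : ((i : ℝ) + 1) / k ≤ (j : ℝ) / k := by gcongr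
    linarith
  · have hij' : ((j : ℝ) + 1) ≤ (i : ℝ) := by exact_mod_cast Nat.succ_le_of_lt hij
    have : ((j : ℝ) + 1) / k ≤ (i : ℝ) / k := by gcongr
    linarith

lemma histBin_mem_of_mem {k : ℕ} (hk : 1 ≤ k) {x : ℝ} (hx : x ∈ Set.Ico (0 : ℝ) 1) :
    ∃ j < k, x ∈ histBin k j := by
  have hk0 : (0 : ℝ) < k := by exact_mod_cast hk
  obtain ⟨hx0, hx1⟩ := hx
  refine ⟨⌊(k : ℝ) * x⌋₊, ?_, ?_, ?_⟩
  · have h1 : ((⌊(k : ℝ) * x⌋₊ : ℝ)) ≤ (k : ℝ) * x := Nat.floor_le (by positivity)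
    have h2 : (k : ℝ) * x < k := by nlinarith
    exact_mod_cast h1.trans_lt h2
  · rw [div_le_iff₀ hk0]
    have := Nat.floor_le (show (0:ℝ) ≤ (k : ℝ) * x by positivity)
    linarith
  · rw [lt_div_iff₀ hk0]
    have := Nat.lt_floor_add_one ((k : ℝ) * x)
    linarith

lemma histBin_union {k : ℕ} (hk : 1 ≤ k) :
    (⋃ j ∈ Finset.range k, histBin k j) = Set.Ico (0 : ℝ) 1 := by
  apply Set.Subset.antisymm
  · intro x hx
    simp only [Set.mem_iUnion, Finset.mem_range] at hx
    obtain ⟨j, hj, hxj⟩ := hx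
    exact histBin_subset hj hxj
  · intro x hx
    obtain ⟨j, hj, hxj⟩ := histBin_mem_of_mem hk hx
    simp only [Set.mem_iUnion, Finset.mem_range]
    exact ⟨j, hj, hxj⟩

lemma histBin_volume {k j : ℕ} (hk : 1 ≤ k) :
    volume (histBin k j) = ENNReal.ofReal (1 / k) := by
  have hk0 : (0 : ℝ) < k := by exact_mod_cast hk
  rw [histBin, Real.volume_Ico]
  congr 1
  field_simp
  ring

lemma histBin_volume_toReal {k j : ℕ} (hk : 1 ≤ k) :
    (volume (histBin k j)).toReal = 1 / k := by
  rw [histBin_volume hk, ENNReal.toReal_ofReal (by positivity)]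

lemma histBin_volume_ne_top {k j : ℕ} (hk : 1 ≤ k) :
    volume (histBin k j) ≠ ⊤ := by
  rw [histBin_volume hk]; exact ENNReal.ofReal_ne_top

lemma histProj_eq_on_bin {k j : ℕ} (hk : 1 ≤ k) (hj : j < k) (g : ℝ → ℝ) {x : ℝ}
    (hx : x ∈ histBin k j) :
    histProj k g x = (k : ℝ) * ∫ y in histBin k j, g y := by
  unfold histProj
  rw [Finset.sum_eq_single j]
  · rw [Set.indicator_of_mem hx]
  · intro i _ hij
    apply Set.indicator_of_notMem
    exact fun hxi => (Set.disjoint_left.mp (histBin_disjoint hk hij) hxi) hx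
  · intro hj'
    exact absurd (Finset.mem_range.mpr hj) hj'

lemma sqrt_sub_sq_le {c a b : ℝ} (hc : 0 < c) (ha : c ≤ a) (hb : c ≤ b) :
    (Real.sqrt a - Real.sqrt b) ^ 2 ≤ (a - b) ^ 2 / (4 * c) := by
  have ha0 : 0 ≤ a := hc.le.trans ha
  have hb0 : 0 ≤ b := hc.le.trans hb
  have hsa := Real.sq_sqrt ha0
  have hsb := Real.sq_sqrt hb0
  have hsc := Real.sq_sqrt hc.le
  have h1 : Real.sqrt c ≤ Real.sqrt a := Real.sqrt_le_sqrt ha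
  have h2 : Real.sqrt c ≤ Real.sqrt b := Real.sqrt_le_sqrt hb
  have h3 : 0 ≤ Real.sqrt c := Real.sqrt_nonneg c
  have hmul : (Real.sqrt a - Real.sqrt b) * (Real.sqrt a + Real.sqrt b) = a - b := by
    linear_combination hsa - hsb
  have hid : (a - b) ^ 2 = (Real.sqrt a - Real.sqrt b) ^ 2 * (Real.sqrt a + Real.sqrt b) ^ 2 := by
    rw [← hmul]; ring
  have hge : 4 * c ≤ (Real.sqrt a + Real.sqrt b) ^ 2 := by nlinarith
  rw [le_div_iff₀ (by positivity), hid]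
  exact mul_le_mul_of_nonneg_left hge (sq_nonneg _)

lemma sq_le_sqrt_sub_sq {C a b : ℝ} (ha0 : 0 ≤ a) (hb0 : 0 ≤ b) (ha : a ≤ C) (hb : b ≤ C) :
    (a - b) ^ 2 ≤ 4 * C * (Real.sqrt a - Real.sqrt b) ^ 2 := by
  have hsa := Real.sq_sqrt ha0
  have hsb := Real.sq_sqrt hb0
  have hC0 : 0 ≤ C := ha0.trans ha
  have hsC := Real.sq_sqrt hC0
  have h1 : Real.sqrt a ≤ Real.sqrt C := Real.sqrt_le_sqrt ha
  have h2 : Real.sqrt b ≤ Real.sqrt C := Real.sqrt_le_sqrt hb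
  have h3 : 0 ≤ Real.sqrt a := Real.sqrt_nonneg a
  have h4 : 0 ≤ Real.sqrt b := Real.sqrt_nonneg b
  have hmul : (Real.sqrt a - Real.sqrt b) * (Real.sqrt a + Real.sqrt b) = a - b := by
    linear_combination hsa - hsb
  have hid : (a - b) ^ 2 = (Real.sqrt a - Real.sqrt b) ^ 2 * (Real.sqrt a + Real.sqrt b) ^ 2 := by
    rw [← hmul]; ring
  have hle : (Real.sqrt a + Real.sqrt b) ^ 2 ≤ 4 * C := by nlinarith
  rw [hid, mul_comm (4 * C)]
  exact mul_le_mul_of_nonneg_left hle (sq_nonneg _)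

lemma integOn_bdd {f : ℝ → ℝ} (hf : Measurable f) {s : Set ℝ} (hs : MeasurableSet s)
    (hvol : volume s ≠ ⊤) {M : ℝ} (hM : ∀ x ∈ s, |f x| ≤ M) :
    IntegrableOn f s volume :=
  Measure.integrableOn_of_bounded hvol hf.aestronglyMeasurable
    (ae_restrict_of_forall_mem hs hM)

set_option maxHeartbeats 1000000 in
/-- Content of the proof of Lemma 3 of the paper: for a density `g₀` on `[0,1]`
bounded in `[c, C]` and any histogram density `g*` with the same bounds,
`h(g₀, g₀_{[k]})² ≤ (C/c) · h(g₀, g*)²`, via the comparability of Hellinger and L²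
distances and the L²-minimality of the histogram projection. -/
theorem stmt_12 (g₀ gstar : ℝ → ℝ) (c C : ℝ) (hc : 0 < c) (hcC : c ≤ C)
    (k : ℕ) (hk : 1 ≤ k)
    (hg₀m : Measurable g₀)
    (hg₀b : ∀ x ∈ Set.Ico (0 : ℝ) 1, c ≤ g₀ x ∧ g₀ x ≤ C)
    (hg₀1 : ∫ x in Set.Ico (0 : ℝ) 1, g₀ x = 1)
    (hgsH : IsHistogram k gstar)
    (hgsb : ∀ x ∈ Set.Ico (0 : ℝ) 1, c ≤ gstar x ∧ gstar x ≤ C)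
    (hgs1 : ∫ x in Set.Ico (0 : ℝ) 1, gstar x = 1) :
    ∫ x in Set.Ico (0 : ℝ) 1,
        (Real.sqrt (g₀ x) - Real.sqrt (histProj k g₀ x)) ^ 2 ≤
      (C / c) * ∫ x in Set.Ico (0 : ℝ) 1,
        (Real.sqrt (g₀ x) - Real.sqrt (gstar x)) ^ 2 := by
  have hk0 : (0 : ℝ) < k := by exact_mod_cast hk
  have hC0 : 0 < C := hc.trans_le hcC
  obtain ⟨a, ha_def⟩ : ∃ a : ℕ → ℝ, a = fun j => (k : ℝ) * ∫ y in histBin k j, g₀ y :=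
    ⟨_, rfl⟩
  obtain ⟨m, hm_def⟩ : ∃ m : ℕ → ℝ, m = fun j : ℕ => gstar ((j : ℝ) / k) := ⟨_, rfl⟩
  -- basic facts about bins
  have hmem_self : ∀ j < k, ((j : ℝ) / k) ∈ histBin k j := by
    intro j hj
    exact ⟨le_refl _, by rw [div_lt_div_iff₀ hk0 hk0]; nlinarith⟩
  -- integrability of g₀ on each bin
  have hg₀int : ∀ j < k, IntegrableOn g₀ (histBin k j) volume := by
    intro j hj
    exact integOn_bdd hg₀m (histBin_meas k j) (histBin_volume_ne_top hk)
      (M := C) fun x hx => by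
        obtain ⟨h1, h2⟩ := hg₀b x (histBin_subset hj hx)
        rw [abs_le]; constructor <;> linarith
  -- bounds on a j
  have ha_bdd : ∀ j < k, c ≤ a j ∧ a j ≤ C := by
    intro j hj
    have hlow : ∫ y in histBin k j, (c : ℝ) ≤ ∫ y in histBin k j, g₀ y :=
      setIntegral_mono_on (integrableOn_const
        (lt_top_iff_ne_top.mpr (histBin_volume_ne_top hk)).ne) (hg₀int j hj)
        (histBin_meas k j) (fun x hx => (hg₀b x (histBin_subset hj hx)).1)
    have hhigh : ∫ y in histBin k j, g₀ y ≤ ∫ y in histBin k j, (C : ℝ) :=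
      setIntegral_mono_on (hg₀int j hj) (integrableOn_const
        (lt_top_iff_ne_top.mpr (histBin_volume_ne_top hk)).ne)
        (histBin_meas k j) (fun x hx => (hg₀b x (histBin_subset hj hx)).2)
    rw [setIntegral_const, measureReal_def, histBin_volume_toReal hk, smul_eq_mul] at hlow hhigh
    simp only [ha_def]
    constructor
    · have := mul_le_mul_of_nonneg_left hlow hk0.le
      calc c = (k : ℝ) * (1 / k * c) := by field_simp
        _ ≤ (k : ℝ) * ∫ y in histBin k j, g₀ y := this
    · have := mul_le_mul_of_nonneg_left hhigh hk0.le
      calc (k : ℝ) * ∫ y in histBin k j, g₀ y ≤ (k : ℝ) * (1 / k * C) := this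
        _ = C := by field_simp
  -- bounds on m j
  have hm_bdd : ∀ j < k, c ≤ m j ∧ m j ≤ C := by
    intro j hj
    simp only [hm_def]
    exact hgsb _ (histBin_subset hj (hmem_self j hj))
  -- gstar = m j on bin j
  have hgs_eq : ∀ j < k, ∀ x ∈ histBin k j, gstar x = m j := by
    intro j hj x hx
    simp only [hm_def]
    exact hgsH j hj x hx _ (hmem_self j hj)
  -- per-bin inequality
  have key : ∀ j < k,
      (∫ x in histBin k j, (Real.sqrt (g₀ x) - Real.sqrt (histProj k g₀ x)) ^ 2) ≤
      (C / c) * ∫ x in histBin k j, (Real.sqrt (g₀ x) - Real.sqrt (gstar x)) ^ 2 := by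
    intro j hj
    have hvne := histBin_volume_ne_top (k := k) (j := j) hk
    have hvlt : volume (histBin k j) < ⊤ := lt_top_iff_ne_top.mpr hvne
    have hbm := histBin_meas k j
    have hsub := histBin_subset hj
    obtain ⟨haj1, haj2⟩ := ha_bdd j hj
    obtain ⟨hmj1, hmj2⟩ := hm_bdd j hj
    -- integrability of the various integrands
    have hint1 : IntegrableOn (fun x => (Real.sqrt (g₀ x) - Real.sqrt (a j)) ^ 2)
        (histBin k j) volume := by
      apply integOn_bdd (by fun_prop) hbm hvne (M := 2 * C)
      intro x hx
      obtain ⟨h1, h2⟩ := hg₀b x (hsub hx)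
      have hs1 := Real.sq_sqrt (show (0:ℝ) ≤ g₀ x by linarith)
      have hs2 := Real.sq_sqrt (show (0:ℝ) ≤ a j by linarith)
      rw [abs_of_nonneg (sq_nonneg _)]
      nlinarith [Real.sqrt_nonneg (g₀ x), Real.sqrt_nonneg (a j)]
    have hint2 : IntegrableOn (fun x => (g₀ x - a j) ^ 2 / (4 * c))
        (histBin k j) volume := by
      apply integOn_bdd (by fun_prop) hbm hvne (M := (2 * C) ^ 2 / (4 * c))
      intro x hx
      obtain ⟨h1, h2⟩ := hg₀b x (hsub hx)
      rw [abs_of_nonneg (by positivity)]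
      apply div_le_div_of_nonneg_right ?_ (by positivity) |>.trans_eq rfl
      nlinarith
    have hint3 : IntegrableOn (fun x => (g₀ x - a j) ^ 2) (histBin k j) volume := by
      apply integOn_bdd (by fun_prop) hbm hvne (M := (2 * C) ^ 2)
      intro x hx
      obtain ⟨h1, h2⟩ := hg₀b x (hsub hx)
      rw [abs_of_nonneg (by positivity)]
      nlinarith
    have hint4 : IntegrableOn (fun x => (g₀ x - m j) ^ 2) (histBin k j) volume := by
      apply integOn_bdd (by fun_prop) hbm hvne (M := (2 * C) ^ 2)
      intro x hx
      obtain ⟨h1, h2⟩ := hg₀b x (hsub hx)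
      rw [abs_of_nonneg (by positivity)]
      nlinarith
    have hint5 : IntegrableOn (fun x => (Real.sqrt (g₀ x) - Real.sqrt (m j)) ^ 2)
        (histBin k j) volume := by
      apply integOn_bdd (by fun_prop) hbm hvne (M := 2 * C)
      intro x hx
      obtain ⟨h1, h2⟩ := hg₀b x (hsub hx)
      have hs1 := Real.sq_sqrt (show (0:ℝ) ≤ g₀ x by linarith)
      have hs2 := Real.sq_sqrt (show (0:ℝ) ≤ m j by linarith)
      rw [abs_of_nonneg (sq_nonneg _)]
      nlinarith [Real.sqrt_nonneg (g₀ x), Real.sqrt_nonneg (m j)]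
    -- step 1 : replace histProj by a j
    have step1 : (∫ x in histBin k j,
        (Real.sqrt (g₀ x) - Real.sqrt (histProj k g₀ x)) ^ 2) =
        ∫ x in histBin k j, (Real.sqrt (g₀ x) - Real.sqrt (a j)) ^ 2 :=
      setIntegral_congr_fun hbm fun x hx => by
        rw [histProj_eq_on_bin hk hj g₀ hx, ha_def]
    -- step 2 : Hellinger ≤ L²/(4c) pointwise
    have step2 : (∫ x in histBin k j, (Real.sqrt (g₀ x) - Real.sqrt (a j)) ^ 2) ≤
        ∫ x in histBin k j, (g₀ x - a j) ^ 2 / (4 * c) := by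
      apply setIntegral_mono_on hint1 hint2 hbm
      intro x hx
      exact sqrt_sub_sq_le hc (hg₀b x (hsub hx)).1 haj1
    -- step 3 : L² minimality  ∫ (g₀ - a j)² ≤ ∫ (g₀ - m j)²
    have hmean : ∫ x in histBin k j, g₀ x = a j / k := by
      simp only [ha_def]; field_simp
    have step3 : (∫ x in histBin k j, (g₀ x - a j) ^ 2) ≤
        ∫ x in histBin k j, (g₀ x - m j) ^ 2 := by
      have expand : (∫ x in histBin k j, (g₀ x - m j) ^ 2) =
          (∫ x in histBin k j, (g₀ x - a j) ^ 2) + (a j - m j) ^ 2 / k := by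
        have hptw : ∀ x ∈ histBin k j, (g₀ x - m j) ^ 2 =
            (g₀ x - a j) ^ 2 + (2 * (a j - m j)) * g₀ x +
              ((a j - m j) ^ 2 - 2 * (a j - m j) * a j) := by
          intro x _; ring
        have hcm : Integrable (fun x => 2 * (a j - m j) * g₀ x)
            (volume.restrict (histBin k j)) := (hg₀int j hj).const_mul _
        have hsum : Integrable (fun x => (g₀ x - a j) ^ 2 + 2 * (a j - m j) * g₀ x)
            (volume.restrict (histBin k j)) := hint3.add hcm
        have hconst : Integrable (fun _ : ℝ => (a j - m j) ^ 2 - 2 * (a j - m j) * a j)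
            (volume.restrict (histBin k j)) := integrableOn_const hvlt.ne
        have e1 := integral_add hsum hconst
        have e2 := integral_add hint3 hcm
        rw [setIntegral_congr_fun hbm hptw, e1, e2,
          integral_const_mul, hmean, setIntegral_const, measureReal_def, histBin_volume_toReal hk,
          smul_eq_mul]
        field_simp
        ring
      rw [expand]
      have : 0 ≤ (a j - m j) ^ 2 / k := by positivity
      linarith
    -- step 4 : L² ≤ 4C · Hellinger pointwise
    have step4 : (∫ x in histBin k j, (g₀ x - m j) ^ 2) ≤
        ∫ x in histBin k j, 4 * C * (Real.sqrt (g₀ x) - Real.sqrt (m j)) ^ 2 := by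
      apply setIntegral_mono_on hint4 (hint5.const_mul _) hbm
      intro x hx
      obtain ⟨h1, h2⟩ := hg₀b x (hsub hx)
      exact sq_le_sqrt_sub_sq (by linarith) (by linarith) h2 hmj2
    -- step 5 : replace m j by gstar
    have step5 : (∫ x in histBin k j, (Real.sqrt (g₀ x) - Real.sqrt (m j)) ^ 2) =
        ∫ x in histBin k j, (Real.sqrt (g₀ x) - Real.sqrt (gstar x)) ^ 2 :=
      (setIntegral_congr_fun hbm fun x hx => by rw [hgs_eq j hj x hx]).symm
    -- combine
    have hIdiv : (∫ x in histBin k j, (g₀ x - a j) ^ 2 / (4 * c)) =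
        (∫ x in histBin k j, (g₀ x - a j) ^ 2) / (4 * c) := integral_div _ _
    have hImul : (∫ x in histBin k j, 4 * C * (Real.sqrt (g₀ x) - Real.sqrt (m j)) ^ 2) =
        4 * C * ∫ x in histBin k j, (Real.sqrt (g₀ x) - Real.sqrt (m j)) ^ 2 :=
      integral_const_mul _ _
    rw [step1, ← step5]
    calc (∫ x in histBin k j, (Real.sqrt (g₀ x) - Real.sqrt (a j)) ^ 2)
        ≤ (∫ x in histBin k j, (g₀ x - a j) ^ 2) / (4 * c) := by
          rw [← hIdiv]; exact step2
      _ ≤ (∫ x in histBin k j, (g₀ x - m j) ^ 2) / (4 * c) := by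
          apply div_le_div_of_nonneg_right step3 (by positivity) |>.trans_eq rfl
      _ ≤ (4 * C * ∫ x in histBin k j, (Real.sqrt (g₀ x) - Real.sqrt (m j)) ^ 2) / (4 * c) := by
          apply div_le_div_of_nonneg_right ?_ (by positivity) |>.trans_eq rfl
          rw [← hImul]; exact step4
      _ = (C / c) * ∫ x in histBin k j, (Real.sqrt (g₀ x) - Real.sqrt (m j)) ^ 2 := by
          field_simp
  -- integrability on each bin of the two global integrands
  have hintL : ∀ j ∈ Finset.range k, IntegrableOn
      (fun x => (Real.sqrt (g₀ x) - Real.sqrt (histProj k g₀ x)) ^ 2)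
      (histBin k j) volume := by
    intro j hj
    rw [Finset.mem_range] at hj
    have hPm : Measurable (histProj k g₀) := by
      apply Finset.measurable_sum
      intro i _
      exact measurable_const.indicator (histBin_meas k i)
    apply integOn_bdd (by fun_prop) (histBin_meas k j) (histBin_volume_ne_top hk)
      (M := 2 * C)
    intro x hx
    obtain ⟨h1, h2⟩ := hg₀b x (histBin_subset hj hx)
    have hP : histProj k g₀ x = a j := by
      rw [histProj_eq_on_bin hk hj g₀ hx, ha_def]
    obtain ⟨ha1, ha2⟩ := ha_bdd j hj
    rw [hP]
    have hs1 := Real.sq_sqrt (show (0:ℝ) ≤ g₀ x by linarith)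
    have hs2 := Real.sq_sqrt (show (0:ℝ) ≤ a j by linarith)
    rw [abs_of_nonneg (sq_nonneg _)]
    nlinarith [Real.sqrt_nonneg (g₀ x), Real.sqrt_nonneg (a j)]
  have hintR : ∀ j ∈ Finset.range k, IntegrableOn
      (fun x => (Real.sqrt (g₀ x) - Real.sqrt (gstar x)) ^ 2)
      (histBin k j) volume := by
    intro j hj
    rw [Finset.mem_range] at hj
    have : Set.EqOn (fun x => (Real.sqrt (g₀ x) - Real.sqrt (gstar x)) ^ 2)
        (fun x => (Real.sqrt (g₀ x) - Real.sqrt (m j)) ^ 2) (histBin k j) := by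
      intro x hx
      simp only
      rw [hgs_eq j hj x hx]
    apply (integrableOn_congr_fun this (histBin_meas k j)).mpr
    obtain ⟨hm1, hm2⟩ := hm_bdd j hj
    apply integOn_bdd (by fun_prop) (histBin_meas k j) (histBin_volume_ne_top hk)
      (M := 2 * C)
    intro x hx
    obtain ⟨h1, h2⟩ := hg₀b x (histBin_subset hj hx)
    have hs1 := Real.sq_sqrt (show (0:ℝ) ≤ g₀ x by linarith)
    have hs2 := Real.sq_sqrt (show (0:ℝ) ≤ m j by linarith)
    rw [abs_of_nonneg (sq_nonneg _)]
    nlinarith [Real.sqrt_nonneg (g₀ x), Real.sqrt_nonneg (m j)]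
  -- split the integrals over bins and sum
  have hdisj : Set.Pairwise (↑(Finset.range k)) (Function.onFun Disjoint (histBin k)) :=
    fun i _ j _ hij => histBin_disjoint hk hij
  have hmeas' : ∀ j ∈ Finset.range k, MeasurableSet (histBin k j) :=
    fun j _ => histBin_meas k j
  rw [← histBin_union hk,
    integral_biUnion_finset (Finset.range k) hmeas' hdisj hintL,
    integral_biUnion_finset (Finset.range k) hmeas' hdisj hintR,
    Finset.mul_sum]
  apply Finset.sum_le_sum
  intro j hj
  exact key j (Finset.mem_range.mp hj)
end

section
/- Let f and φ be probability densities on ℝ with respect to Lebesgue measure, let α ∈ [0,1], let ε > 0, and for z ∈ ℝ let δ_z = (1/(2ε)) 1_{(z−ε, z+ε)} be the uniform density on (z−ε, z+ε). Then lim_{z→∞} ∫ √( ((1−α) f(x) + α δ_z(x)) · φ(x) ) dx = √(1−α) · ∫ √( f(x) φ(x) ) dx. Equivalently, lim_{z→∞} h( (1−α) f + α δ_z, φ )² = 2 − 2√(1−α) ∫ √(f φ). -/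
open MeasureTheory Filter
open scoped Topology

private lemma sqrt_mul_le_add_div_two (a b : ℝ) (ha : 0 ≤ a) (hb : 0 ≤ b) :
    Real.sqrt (a * b) ≤ (a + b) / 2 := by
  rw [Real.sqrt_mul ha]
  nlinarith [Real.sq_sqrt ha, Real.sq_sqrt hb, Real.sqrt_nonneg a, Real.sqrt_nonneg b,
    sq_nonneg (Real.sqrt a - Real.sqrt b)]

private lemma sqrt_mul_le_weighted (u v c : ℝ) (hu : 0 ≤ u) (hv : 0 ≤ v) (hc : 0 < c) :
    Real.sqrt (u * v) ≤ (c * u + v / c) / 2 := by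
  have h := sqrt_mul_le_add_div_two (c * u) (v / c) (by positivity) (by positivity)
  have he : c * u * (v / c) = u * v := by field_simp
  rwa [he] at h

private lemma sqrt_add_le' (a b : ℝ) (ha : 0 ≤ a) (hb : 0 ≤ b) :
    Real.sqrt (a + b) ≤ Real.sqrt a + Real.sqrt b := by
  have h : a + b ≤ (Real.sqrt a + Real.sqrt b) ^ 2 := by
    nlinarith [Real.sq_sqrt ha, Real.sq_sqrt hb, Real.sqrt_nonneg a, Real.sqrt_nonneg b]
  calc Real.sqrt (a + b) ≤ Real.sqrt ((Real.sqrt a + Real.sqrt b) ^ 2) := Real.sqrt_le_sqrt h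
    _ = Real.sqrt a + Real.sqrt b := Real.sqrt_sq (by positivity)

/-- Robustness mechanism of Section 4 of the paper: for the gross-error mixture
`(1−α) f + α δ_z` with `δ_z` the uniform density on `(z−ε, z+ε)`, the Hellinger
affinity with a density `φ` converges to `√(1−α) ∫ √(f φ)` as `z → ∞`;
equivalently `h((1−α) f + α δ_z, φ)² → 2 − 2 √(1−α) ∫ √(f φ)`. -/
theorem stmt_14 (f φ : ℝ → ℝ) (hfm : Measurable f) (hφm : Measurable φ)
    (hf0 : ∀ x, 0 ≤ f x) (hφ0 : ∀ x, 0 ≤ φ x)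
    (hfi : Integrable f) (hφi : Integrable φ)
    (hf1 : ∫ x, f x = 1) (hφ1 : ∫ x, φ x = 1)
    (α : ℝ) (hα0 : 0 ≤ α) (hα1 : α ≤ 1) (ε : ℝ) (hε : 0 < ε) :
    Tendsto
      (fun z : ℝ => ∫ x, Real.sqrt
        (((1 - α) * f x +
          α * (Set.Ioo (z - ε) (z + ε)).indicator (fun _ => 1 / (2 * ε)) x) * φ x))
      atTop (𝓝 (Real.sqrt (1 - α) * ∫ x, Real.sqrt (f x * φ x))) ∧
    Tendsto
      (fun z : ℝ => ∫ x,
        (Real.sqrt ((1 - α) * f x +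
            α * (Set.Ioo (z - ε) (z + ε)).indicator (fun _ => 1 / (2 * ε)) x) -
          Real.sqrt (φ x)) ^ 2)
      atTop (𝓝 (2 - 2 * Real.sqrt (1 - α) * ∫ x, Real.sqrt (f x * φ x))) := by
  have h1α : (0:ℝ) ≤ 1 - α := by linarith
  set D : ℝ → ℝ → ℝ :=
    fun z => (Set.Ioo (z - ε) (z + ε)).indicator (fun _ => 1 / (2 * ε)) with hD
  set m : ℝ → ℝ → ℝ := fun z x => (1 - α) * f x + α * D z x with hm
  have hD0 : ∀ z x, 0 ≤ D z x := by
    intro z x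
    exact Set.indicator_nonneg (fun _ _ => by positivity) x
  have hDmeas : ∀ z, Measurable (D z) :=
    fun z => measurable_const.indicator measurableSet_Ioo
  have hvol : ∀ z : ℝ, volume (Set.Ioo (z - ε) (z + ε)) = ENNReal.ofReal (2 * ε) := by
    intro z; rw [Real.volume_Ioo]; congr 1; ring
  have hDint : ∀ z, Integrable (D z) := by
    intro z
    rw [hD, integrable_indicator_iff measurableSet_Ioo]
    refine integrableOn_const ?_
    rw [hvol z]; exact ENNReal.ofReal_ne_top
  have hDI : ∀ z, ∫ x, D z x = 1 := by
    intro z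
    rw [hD]
    rw [integral_indicator_const (1 / (2 * ε)) measurableSet_Ioo, measureReal_def, hvol z,
      ENNReal.toReal_ofReal (by positivity), smul_eq_mul]
    field_simp
  have hm0 : ∀ z x, 0 ≤ m z x := fun z x => by
    have := hD0 z x; have := hf0 x; positivity
  have hmint : ∀ z, Integrable (m z) :=
    fun z => (hfi.const_mul _).add ((hDint z).const_mul _)
  have hmI : ∀ z, ∫ x, m z x = 1 := by
    intro z
    rw [hm]
    rw [integral_add (hfi.const_mul _) ((hDint z).const_mul _),
      integral_const_mul _ _, integral_const_mul _ _, hf1, hDI z]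
    ring
  -- integrability of the various sqrt functions
  have sqrt_int : ∀ g : ℝ → ℝ, Measurable g → (∀ x, 0 ≤ g x) → Integrable g →
      Integrable (fun x => Real.sqrt (g x * φ x)) := by
    intro g hgm hg0 hgi
    refine Integrable.mono' ((hgi.add hφi).div_const 2)
      ((hgm.mul hφm).sqrt.aestronglyMeasurable) (Filter.Eventually.of_forall fun x => ?_)
    rw [Real.norm_eq_abs, abs_of_nonneg (Real.sqrt_nonneg _)]
    exact sqrt_mul_le_add_div_two _ _ (hg0 x) (hφ0 x)
  have Hfφ : Integrable (fun x => Real.sqrt (f x * φ x)) := sqrt_int f hfm hf0 hfi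
  have Hmφ : ∀ z, Integrable (fun x => Real.sqrt (m z x * φ x)) := by
    intro z
    exact sqrt_int (m z) ((measurable_const.mul hfm).add (measurable_const.mul (hDmeas z)))
      (hm0 z) (hmint z)
  have HDφ : ∀ z, Integrable (fun x => Real.sqrt (α * D z x * φ x)) := by
    intro z
    exact sqrt_int (fun x => α * D z x) (measurable_const.mul (hDmeas z))
      (fun x => mul_nonneg hα0 (hD0 z x)) ((hDint z).const_mul _)
  set S : ℝ := ∫ x, Real.sqrt (f x * φ x) with hS
  set L : ℝ := Real.sqrt (1 - α) * S with hL
  set F : ℝ → ℝ := fun z => ∫ x, Real.sqrt (m z x * φ x) with hF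
  set g : ℝ → ℝ := fun z => ∫ x, Real.sqrt (α * D z x * φ x) with hg
  -- pointwise bounds
  have low : ∀ z x, Real.sqrt (1 - α) * Real.sqrt (f x * φ x) ≤ Real.sqrt (m z x * φ x) := by
    intro z x
    rw [← Real.sqrt_mul h1α]
    apply Real.sqrt_le_sqrt
    have h1 : 0 ≤ α * D z x * φ x := mul_nonneg (mul_nonneg hα0 (hD0 z x)) (hφ0 x)
    have h2 : m z x * φ x = (1 - α) * (f x * φ x) + α * D z x * φ x := by rw [hm]; ring
    linarith
  have high : ∀ z x, Real.sqrt (m z x * φ x) ≤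
      Real.sqrt (1 - α) * Real.sqrt (f x * φ x) + Real.sqrt (α * D z x * φ x) := by
    intro z x
    have h2 : m z x * φ x = (1 - α) * (f x * φ x) + α * D z x * φ x := by rw [hm]; ring
    rw [h2, ← Real.sqrt_mul h1α]
    exact sqrt_add_le' _ _ (mul_nonneg h1α (mul_nonneg (hf0 x) (hφ0 x)))
      (mul_nonneg (mul_nonneg hα0 (hD0 z x)) (hφ0 x))
  -- integral bounds
  have hlow : ∀ z, L ≤ F z := by
    intro z
    have : L = ∫ x, Real.sqrt (1 - α) * Real.sqrt (f x * φ x) := by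
      rw [integral_const_mul _ _]
    rw [this]
    exact integral_mono (Hfφ.const_mul _) (Hmφ z) (low z)
  have hhigh : ∀ z, F z ≤ L + g z := by
    intro z
    have : L + g z = ∫ x,
        (Real.sqrt (1 - α) * Real.sqrt (f x * φ x) + Real.sqrt (α * D z x * φ x)) := by
      rw [integral_add (Hfφ.const_mul _) (HDφ z), integral_const_mul _ _]
    rw [this]
    exact integral_mono (Hmφ z) ((Hfφ.const_mul _).add (HDφ z)) (high z)
  -- tail of φ tends to zero
  have hg0' : ∀ z, 0 ≤ g z := fun z => integral_nonneg fun x => Real.sqrt_nonneg _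
  set T : ℝ → ℝ := fun z => ∫ x in Set.Ioo (z - ε) (z + ε), φ x with hT
  have hT0 : ∀ z, 0 ≤ T z := fun z => setIntegral_nonneg measurableSet_Ioo fun x _ => hφ0 x
  have hIic : Tendsto (fun z : ℝ => ∫ x in Set.Iic (z - ε), φ x) atTop (𝓝 (∫ x, φ x)) := by
    have hb : Tendsto (fun z : ℝ => z - ε) atTop atTop :=
      tendsto_atTop_add_const_right atTop (-ε) tendsto_id
    exact (MeasureTheory.aecover_Iic hb).integral_tendsto_of_countably_generated hφi
  have hIoi : Tendsto (fun z : ℝ => ∫ x in Set.Ioi (z - ε), φ x) atTop (𝓝 0) := by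
    have heq : ∀ z : ℝ, ∫ x in Set.Ioi (z - ε), φ x =
        (∫ x, φ x) - ∫ x in Set.Iic (z - ε), φ x := by
      intro z
      have := integral_add_compl (measurableSet_Iic (a := z - ε)) hφi
      rw [Set.compl_Iic] at this
      linarith
    simp only [heq]
    have := tendsto_const_nhds (x := ∫ x, φ x) (f := atTop (α := ℝ)) |>.sub hIic
    simpa using this
  have hTto : Tendsto T atTop (𝓝 0) := by
    refine tendsto_of_tendsto_of_tendsto_of_le_of_le tendsto_const_nhds hIoi hT0 fun z => ?_
    exact setIntegral_mono_set hφi.integrableOn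
      (Filter.Eventually.of_forall fun x => hφ0 x) (Set.Ioo_subset_Ioi_self).eventuallyLE
  -- g tends to zero
  have hgto : Tendsto g atTop (𝓝 0) := by
    rw [Metric.tendsto_atTop]
    intro η hη
    obtain ⟨N, hN⟩ := Metric.tendsto_atTop.1 hTto (η * η / 2) (by positivity)
    refine ⟨N, fun z hz => ?_⟩
    have hTz : T z < η * η / 2 := by
      have := hN z hz
      rw [Real.dist_eq, abs_of_nonneg (by linarith [hT0 z])] at this
      linarith [hT0 z]
    -- bound g z ≤ η/2 + T z / (2 η)
    have hbound : g z ≤ η / 2 + T z / (2 * η) := by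
      have hptw : ∀ x, Real.sqrt (α * D z x * φ x) ≤
          (η * D z x + (1 / η) * (Set.Ioo (z - ε) (z + ε)).indicator φ x) / 2 := by
        intro x
        by_cases hx : x ∈ Set.Ioo (z - ε) (z + ε)
        · rw [Set.indicator_of_mem hx]
          have h1 : α * D z x * φ x ≤ D z x * φ x := by
            nlinarith [mul_nonneg (mul_nonneg h1α (hD0 z x)) (hφ0 x)]
          calc Real.sqrt (α * D z x * φ x) ≤ Real.sqrt (D z x * φ x) := Real.sqrt_le_sqrt h1
            _ ≤ (η * D z x + φ x / η) / 2 :=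
              sqrt_mul_le_weighted _ _ η (hD0 z x) (hφ0 x) hη
            _ = (η * D z x + (1 / η) * φ x) / 2 := by ring
        · rw [Set.indicator_of_notMem hx]
          have hDx : D z x = 0 := Set.indicator_of_notMem hx _
          rw [hDx]
          simp
      have hint2 : Integrable (fun x => (Set.Ioo (z - ε) (z + ε)).indicator φ x) := by
        rw [integrable_indicator_iff measurableSet_Ioo]
        exact hφi.integrableOn
      have hInt : Integrable (fun x =>
          (η * D z x + (1 / η) * (Set.Ioo (z - ε) (z + ε)).indicator φ x) / 2) :=
        (((hDint z).const_mul _).add (hint2.const_mul _)).div_const 2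
      have := integral_mono (HDφ z) hInt hptw
      rw [integral_div, integral_add ((hDint z).const_mul _) (hint2.const_mul _),
        integral_const_mul _ _, integral_const_mul _ _, hDI z,
        integral_indicator measurableSet_Ioo] at this
      calc g z ≤ (η * 1 + 1 / η * ∫ x in Set.Ioo (z - ε) (z + ε), φ x) / 2 := this
        _ = η / 2 + T z / (2 * η) := by rw [hT]; field_simp
    have : g z < η := by
      have h2 : T z / (2 * η) < η / 4 := by
        rw [div_lt_iff₀ (by positivity)]
        nlinarith
      linarith
    rw [Real.dist_eq, sub_zero, abs_of_nonneg (hg0' z)]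
    exact this
  -- first limit
  have first : Tendsto F atTop (𝓝 L) := by
    have hup : Tendsto (fun z => L + g z) atTop (𝓝 L) := by
      have := tendsto_const_nhds (x := L) (f := atTop (α := ℝ)) |>.add hgto
      simpa using this
    exact tendsto_of_tendsto_of_tendsto_of_le_of_le tendsto_const_nhds hup hlow hhigh
  refine ⟨first, ?_⟩
  -- second limit
  have heq2 : ∀ z, (∫ x, (Real.sqrt (m z x) - Real.sqrt (φ x)) ^ 2) = 2 - 2 * F z := by
    intro z
    have hptw : ∀ x, (Real.sqrt (m z x) - Real.sqrt (φ x)) ^ 2 =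
        m z x + φ x - 2 * Real.sqrt (m z x * φ x) := by
      intro x
      rw [sub_sq, Real.sq_sqrt (hm0 z x), Real.sq_sqrt (hφ0 x),
        Real.sqrt_mul (hm0 z x)]
      ring
    simp only [hptw]
    have h1 : Integrable (fun x => m z x + φ x) := (hmint z).add hφi
    rw [integral_sub h1 ((Hmφ z).const_mul 2),
      integral_add (hmint z) hφi, integral_const_mul _ _, hmI z, hφ1]
    rw [hF]
    ring
  have : Tendsto (fun z => 2 - 2 * F z) atTop (𝓝 (2 - 2 * L)) := by
    exact tendsto_const_nhds.sub (first.const_mul 2)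
  rw [hL, ← mul_assoc] at this
  exact this.congr fun z => (heq2 z).symm
end
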